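/- Let p be a prime, k a field of characteristic p, and G a finite group. Let M be a finitely generated projective module over the group algebra k[G] (MonoidAlgebra k G), and let g ∈ G be an element of order exactly p. Let x : M → M be the k-linear map m ↦ g·m − m. Then x^p = 0 and ker x = range (x^{p-1}); in particular the dimension of M over k is divisible by p. -/

import Mathlib

open Finsupp MonoidAlgebra Module Submodule

section Aux

lemma aux_choose {p : ℕ} (hp : p.Prime) {R : Type*} [Ring R] [CharP R p] :
    ∀ i, i < p → ((Nat.choose (p-1) i : R)) = (-1)^i := by
  obtain ⟨m, hm⟩ : ∃ m, p = m + 1 := ⟨p - 1, (Nat.succ_pred_eq_of_pos hp.pos).symm⟩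
  subst hm
  intro i
  induction i with
  | zero => simp
  | succ n ih =>
    intro hn
    have h2 : ((m+1).choose (n+1) : R) = 0 :=
      (CharP.cast_eq_zero_iff R (m+1) _).mpr (hp.dvd_choose_self (Nat.succ_ne_zero n) hn)
    have h1 : ((m+1).choose (n+1) : R) = (m.choose n : R) + (m.choose (n+1) : R) := by
      rw [Nat.choose_succ_succ, Nat.cast_add]
    have h3 := ih (Nat.lt_of_succ_lt hn)
    simp only [Nat.add_sub_cancel] at h3 ⊢
    have h5 : (m.choose n : R) + (m.choose (n+1) : R) = 0 := by rw [← h1, h2]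
    have h4 := eq_neg_of_add_eq_zero_right h5
    rw [h4, h3, pow_succ, mul_neg_one]

lemma aux_dvd {k V : Type*} [Field k] [AddCommGroup V] [Module k V] [FiniteDimensional k V]
    (p : ℕ) (x : V →ₗ[k] V) (hxp : x ^ p = 0)
    (hker : LinearMap.ker x = LinearMap.range (x ^ (p-1))) : p ∣ finrank k V := by
  set r : ℕ → ℕ := fun i => finrank k (LinearMap.range (x ^ i)) with hr
  set δ : ℕ → ℕ := fun i => finrank k ((LinearMap.ker x ⊓ LinearMap.range (x ^ i) : Submodule k V)) with hδ
  have claim1 : ∀ i, r i = r (i+1) + δ i := by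
    intro i
    set y : LinearMap.range (x ^ i) →ₗ[k] V := x ∘ₗ (LinearMap.range (x ^ i)).subtype with hy
    have h1 : LinearMap.range y = LinearMap.range (x ^ (i+1)) := by
      rw [hy, LinearMap.range_comp, Submodule.range_subtype, pow_succ',
        Module.End.mul_eq_comp, LinearMap.range_comp]
    have h2 : LinearMap.ker y =
        Submodule.comap (LinearMap.range (x ^ i)).subtype
          (LinearMap.ker x ⊓ LinearMap.range (x ^ i)) := by
      rw [hy, LinearMap.ker_comp, Submodule.comap_inf, Submodule.comap_subtype_self, inf_top_eq]
    have e : LinearMap.ker y ≃ₗ[k] ↥(LinearMap.ker x ⊓ LinearMap.range (x ^ i)) := by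
      rw [h2]; exact Submodule.comapSubtypeEquivOfLe inf_le_right
    have h3 := LinearMap.finrank_range_add_finrank_ker y
    rw [h1, e.finrank_eq] at h3
    have h4 : finrank k ↥(LinearMap.range (x ^ i)) = r i := rfl
    rw [h4] at h3
    exact h3.symm
  have hmono : ∀ i j, i ≤ j → δ j ≤ δ i := by
    intro i j hij
    apply Submodule.finrank_mono
    apply inf_le_inf_left
    obtain ⟨c, rfl⟩ := Nat.exists_eq_add_of_le hij
    rw [pow_add, Module.End.mul_eq_comp]
    exact LinearMap.range_comp_le_range _ _
  have hδ0 : δ 0 = finrank k (LinearMap.ker x) := by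
    have h0 : LinearMap.ker x ⊓ LinearMap.range (x ^ 0) = LinearMap.ker x := by
      rw [pow_zero, Module.End.one_eq_id, LinearMap.range_id, inf_top_eq]
    show finrank k ↥(LinearMap.ker x ⊓ LinearMap.range (x ^ 0)) = _
    rw [h0]
  have hδp : δ (p-1) = finrank k (LinearMap.ker x) := by
    have hh : LinearMap.ker x ⊓ LinearMap.range (x ^ (p-1)) = LinearMap.ker x := by
      rw [← hker, inf_idem]
    show finrank k ↥(LinearMap.ker x ⊓ LinearMap.range (x ^ (p-1))) = _
    rw [hh]
  have hδconst : ∀ i, i ≤ p - 1 → δ i = δ 0 := fun i hi =>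
    le_antisymm (hmono 0 i (Nat.zero_le i)) (by rw [hδ0, ← hδp]; exact hmono i (p-1) hi)
  have htel : ∀ n, r 0 = (∑ i ∈ Finset.range n, δ i) + r n := by
    intro n
    induction n with
    | zero => simp
    | succ n ih => rw [ih, claim1 n, Finset.sum_range_succ]; ring
  have hrp : r p = 0 := by
    show finrank k ↥(LinearMap.range (x ^ p)) = 0
    rw [hxp, LinearMap.range_zero]
    exact finrank_bot k V
  have hr0 : r 0 = finrank k V := by
    show finrank k ↥(LinearMap.range (x ^ 0)) = finrank k V
    rw [pow_zero, Module.End.one_eq_id, LinearMap.range_id]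
    exact finrank_top k V
  have h6 := htel p
  rw [hr0, hrp, add_zero] at h6
  rw [h6]
  have h7 : ∑ i ∈ Finset.range p, δ i = p * δ 0 := by
    rw [Finset.sum_congr rfl (fun i hi => hδconst i (Nat.le_sub_one_of_lt (Finset.mem_range.mp hi)))]
    simp [Finset.sum_const, mul_comm]
  rw [h7]
  exact Dvd.intro _ rfl

variable {p : ℕ} {k : Type*} [Field k] [CharP k p]
  {G : Type*} [Group G] [Fintype G]

omit [Fintype G] in
lemma aux_charP : CharP (MonoidAlgebra k G) p := by
  have : Function.Injective (algebraMap k (MonoidAlgebra k G)) := by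
    intro a b hab
    have := congrArg (fun f : MonoidAlgebra k G => f.coeff 1) hab
    simpa [MonoidAlgebra.coe_algebraMap, MonoidAlgebra.coeff_single, Finsupp.single_apply] using this
  exact charP_of_injective_algebraMap this p

omit [Fintype G] in
lemma aux_N (hp : p.Prime) (g : G) :
    (MonoidAlgebra.of k G g - 1) ^ (p - 1)
      = ∑ i ∈ Finset.range p, (MonoidAlgebra.of k G g) ^ i := by
  haveI := Fact.mk hp
  haveI : CharP (MonoidAlgebra k G) p := aux_charP
  set b : MonoidAlgebra k G := MonoidAlgebra.of k G g with hb
  have hcomm : Commute b (-1 : MonoidAlgebra k G) := (Commute.one_right b).neg_right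
  have h1 : b - 1 = b + (-1) := sub_eq_add_neg b 1
  rw [h1, hcomm.add_pow]
  have hpr : p - 1 + 1 = p := Nat.succ_pred_eq_of_pos hp.pos
  rw [hpr]
  apply Finset.sum_congr rfl
  intro i hi
  have hip : i < p := Finset.mem_range.mp hi
  have hii : i ≤ p - 1 := Nat.le_sub_one_of_lt hip
  have hcast : ((p-1).choose i : MonoidAlgebra k G) = (-1)^i := aux_choose hp i hip
  rw [hcast]
  have h2 : (-1 : MonoidAlgebra k G) ^ (p - 1 - i) * (-1)^i = (-1)^(p-1) := by
    rw [← pow_add, Nat.sub_add_cancel hii]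
  rw [mul_assoc, h2]
  have hone : (-1 : MonoidAlgebra k G) ^ (p - 1) = 1 := by
    rcases hp.eq_two_or_odd' with h2 | hodd
    · subst h2
      norm_num
      exact CharTwo.neg_eq 1
    · have : Even (p - 1) := Nat.Odd.sub_odd hodd odd_one
      exact this.neg_one_pow
  rw [hone, mul_one]

lemma aux_key3 (hp : p.Prime) (g : G) (hg : orderOf g = p)
    (u : MonoidAlgebra k G)
    (hu : (MonoidAlgebra.of k G g - 1) * u = 0) :
    ∃ v, (MonoidAlgebra.of k G g - 1) ^ (p - 1) * v = u := by
  classical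
  have hbu : MonoidAlgebra.of k G g * u = u := by
    have h' := hu
    rw [sub_mul, one_mul, sub_eq_zero] at h'
    exact h'
  have hgp : g ^ p = 1 := hg ▸ pow_orderOf_eq_one g
  have hinv : ∀ h : G, u.coeff (g⁻¹ * h) = u.coeff h := by
    intro h
    have := congrArg (fun f : MonoidAlgebra k G => f.coeff h) hbu
    simpa [MonoidAlgebra.of_apply, MonoidAlgebra.coeff_single_mul_apply] using this
  have hinvn : ∀ (i : ℕ) (h : G), u.coeff ((g ^ i)⁻¹ * h) = u.coeff h := by
    intro i
    induction i with
    | zero => simp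
    | succ n ih =>
      intro h
      have e : (g ^ (n+1))⁻¹ * h = g⁻¹ * ((g ^ n)⁻¹ * h) := by
        rw [pow_succ]; group
      rw [e, hinv, ih]
  let st : Setoid G :=
    ⟨fun h₁ h₂ => ∃ i : ℤ, h₂ = g ^ i * h₁,
     ⟨fun h => ⟨0, by simp⟩,
      fun ⟨i, hi⟩ => ⟨-i, by rw [hi]; group⟩,
      fun ⟨i, hi⟩ ⟨j, hj⟩ => ⟨j + i, by rw [hj, hi]; group⟩⟩⟩
  let rep : G → G := fun h => (Quotient.mk st h).out
  have hrep_rel : ∀ h, ∃ i : ℤ, rep h = g ^ i * h := by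
    intro h
    have h1 : Quotient.mk st ((Quotient.mk st h).out) = Quotient.mk st h :=
      Quotient.out_eq _
    obtain ⟨i, hi⟩ := Quotient.exact h1
    refine ⟨-i, ?_⟩
    conv_rhs => rw [hi]
    show (Quotient.mk st h).out = _
    group
  have hrep_congr : ∀ h₁ h₂, (∃ i : ℤ, h₂ = g ^ i * h₁) → rep h₁ = rep h₂ := by
    intro h₁ h₂ hrel
    show (Quotient.mk st h₁).out = (Quotient.mk st h₂).out
    rw [Quotient.sound hrel]
  let w : MonoidAlgebra k G :=
    MonoidAlgebra.ofCoeff (Finsupp.equivFunOnFinite.symm (fun h => if rep h = h then u.coeff h else 0))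
  refine ⟨w, ?_⟩
  rw [aux_N hp g]
  ext h
  rw [Finset.sum_mul, MonoidAlgebra.coeff_sum, Finsupp.finset_sum_apply]
  have hterm : ∀ i : ℕ, ((MonoidAlgebra.of k G g) ^ i * w).coeff h
      = if rep h = (g ^ i)⁻¹ * h then u.coeff h else 0 := by
    intro i
    have hpow : (MonoidAlgebra.of k G g) ^ i = MonoidAlgebra.single (g ^ i) (1 : k) := by
      rw [← map_pow]; rfl
    rw [hpow, MonoidAlgebra.coeff_single_mul_apply, one_mul]
    have hw : w.coeff ((g ^ i)⁻¹ * h) = if rep ((g ^ i)⁻¹ * h) = (g ^ i)⁻¹ * h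
        then u.coeff ((g ^ i)⁻¹ * h) else 0 := by
      simp [w, Finsupp.equivFunOnFinite]
    rw [hw, hrep_congr h ((g ^ i)⁻¹ * h) ⟨-(i : ℤ), by rw [zpow_neg, zpow_natCast]⟩,
      hinvn i h]
  obtain ⟨z, hz⟩ := hrep_rel h
  set i₀ : ℕ := ((-z) % (p : ℤ)).toNat with hi₀
  have hppos : (0 : ℤ) < (p : ℤ) := by exact_mod_cast hp.pos
  have hi₀cast : (i₀ : ℤ) = (-z) % (p : ℤ) :=
    Int.toNat_of_nonneg (Int.emod_nonneg _ (ne_of_gt hppos))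
  have hi₀lt : i₀ < p := by
    have := Int.emod_lt_of_pos (-z) hppos
    omega
  have hgz : (g ^ i₀)⁻¹ = g ^ z := by
    have hzp : (g : G) ^ ((p : ℤ)) = 1 := by
      rw [zpow_natCast, hgp]
    have h2 : g ^ (-(i₀ : ℤ)) = g ^ z := by
      rw [hi₀cast]
      have hdiv : -((-z) % (p : ℤ)) = z + (p : ℤ) * ((-z) / (p : ℤ)) := by
        have := Int.emod_add_mul_ediv (-z) (p : ℤ)
        linarith
      rw [hdiv, zpow_add, zpow_mul, hzp, one_zpow, mul_one]
    rw [← h2, ← zpow_natCast, ← zpow_neg]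
  have hmem : i₀ ∈ Finset.range p := Finset.mem_range.mpr hi₀lt
  have hothers : ∀ j ∈ Finset.range p, j ≠ i₀ →
      (if rep h = (g ^ j)⁻¹ * h then u.coeff h else 0) = 0 := by
    intro j hj hne
    rw [if_neg]
    intro hcon
    apply hne
    have h3 : (g ^ j)⁻¹ * h = (g ^ i₀)⁻¹ * h := by rw [← hcon, hgz, hz]
    have hgj : g ^ j = g ^ i₀ := inv_injective (mul_right_cancel h3)
    exact pow_injOn_Iio_orderOf (by simpa [hg] using Finset.mem_range.mp hj)
      (by simpa [hg] using hi₀lt) hgj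
  rw [Finset.sum_congr rfl (fun i _ => hterm i),
    Finset.sum_eq_single_of_mem i₀ hmem hothers, if_pos (by rw [hgz, hz])]

end Aux

/-- if `M` is a finitely generated projective module over `k[G]` for a
finite group `G` over a field `k` of characteristic `p`, and `g ∈ G` has order exactly
`p`, then the `k`-linear map `x : m ↦ g·m − m` satisfies `x^p = 0` and
`ker x = range x^(p-1)`; in particular `p` divides `dim_k M`. -/
theorem stmt12 (p : ℕ) (hp : p.Prime) (k : Type*) [Field k] [CharP k p]
    (G : Type*) [Group G] [Fintype G]
    (M : Type*) [AddCommGroup M] [Module (MonoidAlgebra k G) M]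
    [Module k M] [IsScalarTower k (MonoidAlgebra k G) M]
    [Module.Projective (MonoidAlgebra k G) M] [Module.Finite (MonoidAlgebra k G) M]
    (g : G) (hg : orderOf g = p)
    (x : M →ₗ[k] M) (hxdef : ∀ m : M, x m = (MonoidAlgebra.of k G g) • m - m) :
    x ^ p = 0 ∧ LinearMap.ker x = LinearMap.range (x ^ (p - 1)) ∧
      p ∣ Module.finrank k M := by
  classical
  haveI := Fact.mk hp
  haveI : CharP (MonoidAlgebra k G) p := aux_charP
  have hgp : g ^ p = 1 := hg ▸ pow_orderOf_eq_one g
  set a : MonoidAlgebra k G := MonoidAlgebra.of k G g - 1 with ha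
  have hxa : ∀ m : M, x m = a • m := by
    intro m; rw [hxdef, ha, sub_smul, one_smul]
  have hpow : ∀ (n : ℕ) (m : M), (x ^ n) m = (a ^ n) • m := by
    intro n
    induction n with
    | zero => intro m; simp
    | succ n ih =>
      intro m
      rw [pow_succ, Module.End.mul_apply, hxa m, ih, ← mul_smul, ← pow_succ]
  have hap : a ^ p = 0 := by
    have hc : Commute (MonoidAlgebra.of k G g) (1 : MonoidAlgebra k G) := Commute.one_right _
    rw [ha, sub_pow_char_of_commute p hc, ← map_pow, hgp, map_one, one_pow, sub_self]
  have hxp0 : x ^ p = 0 := by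
    ext m
    rw [hpow p m, hap, zero_smul]
    rfl
  have hsucc : p - 1 + 1 = p := Nat.succ_pred_eq_of_pos hp.pos
  -- splitting from projectivity
  obtain ⟨s, hs⟩ := (Module.projective_def'.mp
    (inferInstance : Module.Projective (MonoidAlgebra k G) M))
  set π : (M →₀ MonoidAlgebra k G) →ₗ[MonoidAlgebra k G] M :=
    Finsupp.linearCombination (MonoidAlgebra k G) (id : M → M) with hπ
  have hπs : ∀ m : M, π (s m) = m := by
    intro m
    have := LinearMap.ext_iff.mp hs m
    simpa using this
  have hker : LinearMap.ker x = LinearMap.range (x ^ (p - 1)) := by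
    apply le_antisymm
    · -- ker ⊆ range
      intro m hm
      have ham : a • m = 0 := by
        rw [← hxa]; exact hm
      have hsm : a • (s m) = 0 := by
        rw [← map_smul, ham, map_zero]
      -- lift coordinatewise
      have hf : ∀ i : M, a * (s m) i = 0 := by
        intro i
        have := congrArg (fun q : M →₀ MonoidAlgebra k G => q i) hsm
        simpa [Finsupp.smul_apply, smul_eq_mul] using this
      let φ : MonoidAlgebra k G → MonoidAlgebra k G := fun c =>
        if hc : (∃ v, a ^ (p-1) * v = c) ∧ c ≠ 0 then hc.1.choose else 0
      have hφ0 : φ 0 = 0 := by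
        show (if hc : (∃ v, a ^ (p-1) * v = (0:MonoidAlgebra k G)) ∧ (0:MonoidAlgebra k G) ≠ 0
          then hc.1.choose else 0) = 0
        rw [dif_neg]
        intro hcon
        exact hcon.2 rfl
      let t : M →₀ MonoidAlgebra k G := Finsupp.mapRange φ hφ0 (s m)
      have hts : a ^ (p-1) • t = s m := by
        apply Finsupp.ext
        intro i
        rw [Finsupp.smul_apply, smul_eq_mul]
        show a ^ (p-1) * φ ((s m) i) = (s m) i
        by_cases hzero : (s m) i = 0
        · rw [hzero, hφ0, mul_zero]
        · have hex : ∃ v, a ^ (p-1) * v = (s m) i := aux_key3 hp g hg _ (hf i)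
          have hcond : (∃ v, a ^ (p-1) * v = (s m) i) ∧ (s m) i ≠ 0 := ⟨hex, hzero⟩
          show a ^ (p-1) * φ ((s m) i) = (s m) i
          rw [show φ ((s m) i) = hcond.1.choose from dif_pos hcond]
          exact hcond.1.choose_spec
      refine ⟨π t, ?_⟩
      rw [hpow (p-1) (π t), ← map_smul, hts, hπs]
    · -- range ⊆ ker
      rintro m' ⟨m, rfl⟩
      show x ((x ^ (p-1)) m) = 0
      rw [hxa, hpow (p-1) m, ← mul_smul, ← pow_succ', hsucc, hap, zero_smul]
  haveI : Module.Finite k (MonoidAlgebra k G) :=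
    Module.Finite.equiv ((MonoidAlgebra.coeffLinearEquiv k : MonoidAlgebra k G ≃ₗ[k] (G →₀ k)).trans
      (Finsupp.linearEquivFunOnFinite k k G)).symm
  haveI : Module.Finite k M := Module.Finite.trans (MonoidAlgebra k G) M
  exact ⟨hxp0, hker, aux_dvd p x hxp0 hker⟩
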